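/- Let g(A) = ‖A‖_(k) be the Ky Fan k-norm on M_n(ℂ). Then for all X ∈ M_n(ℂ), the right directional derivative g'_+(A, X) = lim_{t→0+} (‖A + tX‖_(k) − ‖A‖_(k))/t equals the maximum of ∑_{i=1}^k Re⟨u_i, Xv_i⟩ over all orthonormal systems u_1,...,u_k and v_1,...,v_k in ℂ^n satisfying Av_i = s_i(A)u_i for all 1 ≤ i ≤ k. -/

import Mathlib

open Matrix BigOperators
open scoped ComplexOrder

noncomputable def svalues {m p : ℕ} (A : Matrix (Fin m) (Fin p) ℂ) : Fin p → ℝ :=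
  fun i => Real.sqrt
    (((Matrix.isHermitian_conjTranspose_mul_self A).eigenvalues ∘
      Tuple.sort (Matrix.isHermitian_conjTranspose_mul_self A).eigenvalues) i.rev)

noncomputable def kyFan {n : ℕ} (k : ℕ) (A : Matrix (Fin n) (Fin n) ℂ) : ℝ :=
  ∑ i ∈ Finset.univ.filter (fun i : Fin n => (i : ℕ) < k), svalues A i

def ONSys {n k : ℕ} (u : Fin k → Fin n → ℂ) : Prop :=
  ∀ i j, star (u i) ⬝ᵥ u j = if i = j then 1 else 0

noncomputable def eigDesc {n : ℕ} (A : Matrix (Fin n) (Fin n) ℂ) (hA : A.IsHermitian) :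
    Fin n → ℝ :=
  (hA.eigenvalues ∘ Tuple.sort hA.eigenvalues) ∘ Fin.rev

namespace KF

variable {n k : ℕ}

noncomputable def ell (u v : Fin k → Fin n → ℂ) (B : Matrix (Fin n) (Fin n) ℂ) : ℝ :=
  ∑ i, (star (u i) ⬝ᵥ (B *ᵥ v i)).re

lemma svalues_nonneg {B : Matrix (Fin n) (Fin n) ℂ} (i : Fin n) : 0 ≤ svalues B i :=
  Real.sqrt_nonneg _

lemma svalues_antitone {B : Matrix (Fin n) (Fin n) ℂ} : Antitone (svalues B) := by
  intro i j hij
  unfold svalues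
  apply Real.sqrt_le_sqrt
  exact Tuple.monotone_sort _ (by simpa using Fin.rev_le_rev.mpr hij)

noncomputable def toE (x : Fin n → ℂ) : EuclideanSpace ℂ (Fin n) := (WithLp.equiv 2 _).symm x

lemma inner_toE (x y : Fin n → ℂ) : @inner ℂ _ _ (toE x) (toE y) = star x ⬝ᵥ y := by
  simp [toE, PiLp.inner_apply, dotProduct, mul_comm]

lemma onsys_iff_orthonormal (u : Fin k → Fin n → ℂ) :
    ONSys u ↔ Orthonormal ℂ (fun i => toE (u i)) := by
  rw [orthonormal_iff_ite]
  simp only [inner_toE]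
  exact ⟨fun h i j => h i j, fun h i j => h i j⟩

lemma svd_exists' (B : Matrix (Fin n) (Fin n) ℂ)
    (w v : Fin n → Fin n → ℂ) (hwdef : ∀ i, w i = B *ᵥ v i)
    (hww : ∀ i j, star (w i) ⬝ᵥ w j = if i = j then ((svalues B j)^2 : ℝ) else 0) :
    ∃ u : Fin n → Fin n → ℂ, ONSys u ∧
      ∀ i, B *ᵥ v i = ((svalues B i : ℝ) : ℂ) • u i := by
  classical
  set s : Fin n → ℝ := svalues B with hsdef
  set N : Set (Fin n) := {i | s i ≠ 0} with hNdef
  set g : Fin n → EuclideanSpace ℂ (Fin n) := fun i => (((s i)⁻¹ : ℝ) : ℂ) • toE (w i) with hgdef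
  have hg : Orthonormal ℂ (N.restrict g) := by
    rw [orthonormal_iff_ite]
    rintro ⟨i, hi⟩ ⟨j, hj⟩
    show inner ℂ (g i) (g j) = _
    simp only [Set.restrict_apply, hgdef, inner_smul_left, inner_smul_right, inner_toE,
      Complex.conj_ofReal, hww i j]
    by_cases h : i = j
    · subst h
      simp only [if_pos rfl, Subtype.mk.injEq, if_pos rfl]
      have hs : ((s i : ℝ) : ℂ) ≠ 0 := Complex.ofReal_ne_zero.mpr hi
      push_cast
      field_simp
    · simp [h, Subtype.mk.injEq]
  obtain ⟨b, hb⟩ := hg.exists_orthonormalBasis_extension_of_card_eq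
    (by simp [finrank_euclideanSpace])
  refine ⟨fun i => ⇑(b i), ?_, ?_⟩
  · rw [onsys_iff_orthonormal]
    exact b.orthonormal
  · intro i
    rw [← hwdef i]
    by_cases h : s i = 0
    · have hw0 : w i = 0 := by
        have := hww i i
        rw [if_pos rfl, h] at this
        simpa using dotProduct_star_self_eq_zero.mp (by simpa using this)
      rw [hw0, hsdef] at *
      simp [h]
    · have hbi : b i = g i := hb i h
      funext a
      simp only [hbi]
      have hs : ((s i : ℝ) : ℂ) ≠ 0 := Complex.ofReal_ne_zero.mpr h
      simp only [hgdef, toE, Pi.smul_apply, smul_eq_mul]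
      show w i a = (s i : ℂ) * (((s i)⁻¹ : ℝ) * w i a)
      push_cast
      field_simp

lemma svd_exists (B : Matrix (Fin n) (Fin n) ℂ) :
    ∃ u v : Fin n → Fin n → ℂ, ONSys u ∧ ONSys v ∧
      ∀ i, B *ᵥ v i = ((svalues B i : ℝ) : ℂ) • u i := by
  classical
  set hH := Matrix.isHermitian_conjTranspose_mul_self B with hHdef
  set μ := hH.eigenvalues with hμdef
  set π : Fin n → Fin n := fun i => Tuple.sort μ i.rev with hπdef
  have hπinj : Function.Injective π := fun i j h => by
    have := (Tuple.sort μ).injective h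
    exact Fin.rev_injective this
  set v : Fin n → Fin n → ℂ := fun i => ⇑(hH.eigenvectorBasis (π i)) with hvdef
  have hvON : ONSys v := by
    rw [onsys_iff_orthonormal]
    exact (hH.eigenvectorBasis.orthonormal.comp π hπinj)
  have hμπ : ∀ i, μ (π i) = (svalues B i) ^ 2 := by
    intro i
    have h0 : 0 ≤ μ (π i) := (Matrix.posSemidef_conjTranspose_mul_self B).eigenvalues_nonneg _
    rw [show svalues B i = Real.sqrt (μ (π i)) from rfl, Real.sq_sqrt h0]
  have hHv : ∀ i, (Bᴴ * B) *ᵥ v i = (μ (π i) : ℂ) • v i := by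
    intro i
    simpa using hH.mulVec_eigenvectorBasis (π i)
  set w : Fin n → Fin n → ℂ := fun i => B *ᵥ v i with hwdef
  have hww : ∀ i j, star (w i) ⬝ᵥ w j = if i = j then ((svalues B j)^2 : ℝ) else 0 := by
    intro i j
    rw [hwdef]
    rw [star_mulVec, dotProduct_mulVec, vecMul_vecMul]
    rw [← dotProduct_mulVec, hHv j, dotProduct_smul]
    rw [hvON i j]
    split
    · simp [hμπ j]
    · simp
  obtain ⟨u, huON, hcond⟩ := svd_exists' B w v (fun i => rfl) hww
  exact ⟨u, v, huON, hvON, hcond⟩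

lemma kyFan_eq_sum (hk : k ≤ n) (B : Matrix (Fin n) (Fin n) ℂ) :
    kyFan k B = ∑ i : Fin k, svalues B (Fin.castLE hk i) := by
  unfold kyFan
  refine (Finset.sum_bij'
    (fun (i : Fin n) h => (⟨i, by simpa using (Finset.mem_filter.mp h).2⟩ : Fin k))
    (fun (i : Fin k) _ => Fin.castLE hk i) ?_ ?_ ?_ ?_ ?_) <;> simp [Fin.ext_iff, Fin.is_lt]

lemma ell_eval (hk : k ≤ n) {u v : Fin k → Fin n → ℂ} {B : Matrix (Fin n) (Fin n) ℂ}
    (hu : ONSys u) (hBv : ∀ i, B *ᵥ v i = ((svalues B (Fin.castLE hk i) : ℝ) : ℂ) • u i) :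
    ell u v B = kyFan k B := by
  rw [kyFan_eq_sum hk]
  unfold ell
  congr 1; ext i
  rw [hBv i, dotProduct_smul, hu i i, if_pos rfl]
  simp

lemma svd_exists_k (hk : k ≤ n) (B : Matrix (Fin n) (Fin n) ℂ) :
    ∃ u v : Fin k → Fin n → ℂ, ONSys u ∧ ONSys v ∧
      ∀ i, B *ᵥ v i = ((svalues B (Fin.castLE hk i) : ℝ) : ℂ) • u i := by
  obtain ⟨u, v, hu, hv, h⟩ := svd_exists B
  exact ⟨u ∘ Fin.castLE hk, v ∘ Fin.castLE hk, fun i j => by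
      simpa [Fin.castLE] using (hu (Fin.castLE hk i) (Fin.castLE hk j)).trans (by
        simp [Fin.ext_iff]), fun i j => by
      simpa using (hv (Fin.castLE hk i) (Fin.castLE hk j)).trans (by simp [Fin.ext_iff]),
    fun i => h _⟩

lemma ell_affine (u v : Fin k → Fin n → ℂ) (B C : Matrix (Fin n) (Fin n) ℂ) (t : ℝ) :
    ell u v (B + (t : ℂ) • C) = ell u v B + t * ell u v C := by
  unfold ell
  rw [Finset.mul_sum, ← Finset.sum_add_distrib]
  congr 1; ext i
  rw [add_mulVec, smul_mulVec, dotProduct_add, dotProduct_smul]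
  simp [Complex.add_re, Complex.ofReal_re, Complex.mul_re, Complex.ofReal_im]

lemma range_filter_lt (m k : ℕ) :
    (Finset.range m).filter (fun l => l < k) = Finset.range (min m k) := by
  ext l; simp [Nat.lt_min, and_comm]

open Finset in
lemma abel_bound (σ c : Fin n → ℝ) (hσ : Antitone σ)
    (hσ0 : ∀ j, 0 ≤ σ j) (hc1 : ∀ j, c j ≤ 1)
    (hck : ∀ m : ℕ, ∑ j ∈ Finset.univ.filter (fun j : Fin n => (j : ℕ) < m), c j ≤ k) :
    ∑ j, σ j * c j ≤ ∑ j ∈ Finset.univ.filter (fun j : Fin n => (j : ℕ) < k), σ j := by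
  classical
  set σ' : ℕ → ℝ := fun m => if h : m < n then σ ⟨m, h⟩ else 0 with hσ'def
  set c' : ℕ → ℝ := fun m => if h : m < n then c ⟨m, h⟩ else 0 with hc'def
  set e : ℕ → ℝ := fun m => if m < k then 1 else 0 with hedef
  have hC : ∀ m : ℕ, ∑ l ∈ range m, c' l = ∑ j ∈ Finset.univ.filter (fun j : Fin n => (j : ℕ) < m), c j := by
    intro m
    rw [← Finset.sum_filter_of_ne (p := fun l => l < n)
      (fun x _ hne => by by_contra h; simp [hc'def, h] at hne)]
    refine Finset.sum_bij' (fun l h => (⟨l, (Finset.mem_filter.mp h).2⟩ : Fin n))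
      (fun j _ => (j : ℕ)) ?_ ?_ ?_ ?_ ?_ <;>
      simp +contextual [hc'def, Fin.is_lt]
  have hE : ∀ m : ℕ, ∑ l ∈ range m, e l = min m k := by
    intro m
    rw [hedef]
    rw [Finset.sum_boole, range_filter_lt]
    simp
  have hCle : ∀ m : ℕ, ∑ l ∈ range m, c' l ≤ min m k := by
    intro m
    rw [Nat.cast_min]
    refine le_min ?_ (by rw [hC]; exact hck m)
    calc ∑ l ∈ range m, c' l ≤ ∑ l ∈ range m, 1 := by
          refine Finset.sum_le_sum fun l _ => ?_
          rw [hc'def]; dsimp only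
          split
          · exact hc1 _
          · exact zero_le_one
      _ = m := by simp
  have key : ∀ f : ℕ → ℝ, ∑ l ∈ range n, σ' l * f l =
      σ' (n - 1) * (∑ l ∈ range n, f l)
        + ∑ i ∈ range (n - 1), (σ' i - σ' (i + 1)) * (∑ l ∈ range (i + 1), f l) := by
    intro f
    have := Finset.sum_range_by_parts σ' f n
    simp only [smul_eq_mul] at this
    rw [this, sub_eq_add_neg, ← Finset.sum_neg_distrib]
    congr 1
    refine Finset.sum_congr rfl fun i _ => by ring
  have hσ'mono : ∀ i j : ℕ, i ≤ j → σ' j ≤ σ' i := by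
    intro i j hij
    rw [hσ'def]; dsimp only
    split <;> split
    · exact hσ (by exact_mod_cast hij)
    · omega
    · exact hσ0 _
    · exact le_rfl
  have hσ'0 : ∀ i, 0 ≤ σ' i := by
    intro i; rw [hσ'def]; dsimp only; split
    · exact hσ0 _
    · exact le_rfl
  have lhs_eq : ∑ j, σ j * c j = ∑ l ∈ range n, σ' l * c' l := by
    rw [Finset.sum_congr rfl (fun (j : Fin n) _ =>
      (show σ j * c j = σ' (j : ℕ) * c' (j : ℕ) by simp [hσ'def, hc'def, Fin.is_lt]))]
    exact Fin.sum_univ_eq_sum_range (fun l => σ' l * c' l) n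
  have rhs_eq : (∑ j ∈ Finset.univ.filter (fun j : Fin n => (j : ℕ) < k), σ j)
      = ∑ l ∈ range n, σ' l * e l := by
    rw [Finset.sum_filter]
    rw [Finset.sum_congr rfl (fun (j : Fin n) _ =>
      (show (if (j : ℕ) < k then σ j else 0) = σ' (j : ℕ) * e (j : ℕ) by
        simp only [hσ'def, hedef, dif_pos j.is_lt]
        by_cases h : (j : ℕ) < k <;> simp [h]))]
    exact Fin.sum_univ_eq_sum_range (fun l => σ' l * e l) n
  rw [lhs_eq, rhs_eq, key c', key e]
  refine add_le_add ?_ ?_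
  · refine mul_le_mul_of_nonneg_left ?_ (hσ'0 _)
    rw [hE]
    exact hCle n
  · refine Finset.sum_le_sum fun i _ => ?_
    refine mul_le_mul_of_nonneg_left ?_ (sub_nonneg.mpr (hσ'mono i (i+1) (Nat.le_succ i)))
    rw [hE]
    exact hCle (i + 1)

lemma onsys_norm_one {u : Fin k → Fin n → ℂ} (hu : ONSys u) (i : Fin k) : ‖toE (u i)‖ = 1 := by
  have h := hu i i
  rw [if_pos rfl] at h
  have h3 : ‖toE (u i)‖ ^ 2 = 1 := by
    rw [@norm_sq_eq_re_inner ℂ, inner_toE, h]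
    simp
  nlinarith [norm_nonneg (toE (u i))]

lemma bessel {u : Fin k → Fin n → ℂ} (hu : ONSys u) (x : Fin n → ℂ) :
    ∑ i, ‖star (u i) ⬝ᵥ x‖ ^ 2 ≤ ‖toE x‖ ^ 2 := by
  have := ((onsys_iff_orthonormal u).mp hu).sum_inner_products_le (toE x) (s := Finset.univ)
  simpa [inner_toE] using this

lemma dotProduct_sumr {ι : Type*} (x : Fin n → ℂ) (s : Finset ι) (f : ι → Fin n → ℂ) :
    x ⬝ᵥ (∑ j ∈ s, f j) = ∑ j ∈ s, x ⬝ᵥ f j := by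
  simp only [dotProduct, Finset.sum_apply, Finset.mul_sum]
  exact Finset.sum_comm

lemma mulVec_sumr {ι : Type*} (B : Matrix (Fin n) (Fin n) ℂ) (s : Finset ι) (f : ι → Fin n → ℂ) :
    B *ᵥ (∑ j ∈ s, f j) = ∑ j ∈ s, B *ᵥ f j := by
  exact map_sum (Matrix.mulVecLin B) f s

lemma onsys_expansion {q : Fin n → Fin n → ℂ} (hq : ONSys q) (x : Fin n → ℂ) :
    x = ∑ j, (star (q j) ⬝ᵥ x) • q j := by
  have horth : Orthonormal ℂ (Set.univ.restrict (fun j => toE (q j))) :=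
    ((onsys_iff_orthonormal q).mp hq).comp _ Subtype.val_injective
  obtain ⟨b, hb⟩ := horth.exists_orthonormalBasis_extension_of_card_eq
    (by simp [finrank_euclideanSpace])
  have hb' : ∀ j, b j = toE (q j) := fun j => hb j (Set.mem_univ j)
  have h := b.sum_repr' (toE x)
  simp_rw [hb', inner_toE] at h
  have h2 := congrArg (WithLp.linearEquiv 2 ℂ (Fin n → ℂ)) h
  rw [map_sum] at h2
  simp only [_root_.map_smul] at h2
  exact h2.symm

lemma ell_bound (hk : k ≤ n) {u v : Fin k → Fin n → ℂ} (B : Matrix (Fin n) (Fin n) ℂ)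
    (hu : ONSys u) (hv : ONSys v) : ell u v B ≤ kyFan k B := by
  classical
  obtain ⟨p, q, hp, hq, hpq⟩ := svd_exists B
  set σ : Fin n → ℝ := svalues B with hσdef
  set c : Fin n → ℝ := fun j => ∑ i, ((star (u i) ⬝ᵥ p j) * (star (q j) ⬝ᵥ v i)).re with hcdef
  have norm_symm : ∀ (x y : Fin n → ℂ), ‖star x ⬝ᵥ y‖ = ‖star y ⬝ᵥ x‖ := by
    intro x y
    rw [← inner_toE, ← inner_toE]
    exact norm_inner_symm _ _
  -- main identity
  have main : ell u v B = ∑ j, σ j * c j := by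
    unfold ell
    have expand : ∀ i, star (u i) ⬝ᵥ (B *ᵥ v i)
        = ∑ j, (star (q j) ⬝ᵥ v i) * ((σ j : ℂ) * (star (u i) ⬝ᵥ p j)) := by
      intro i
      conv_lhs => rw [onsys_expansion hq (v i), mulVec_sumr]
      rw [Finset.sum_congr rfl (fun j _ => by
        rw [Matrix.mulVec_smul, hpq j] :
          ∀ j ∈ Finset.univ, B *ᵥ ((star (q j) ⬝ᵥ v i) • q j)
            = (star (q j) ⬝ᵥ v i) • ((σ j : ℂ) • p j))]
      rw [dotProduct_sumr]
      refine Finset.sum_congr rfl fun j _ => ?_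
      rw [dotProduct_smul, dotProduct_smul]
      simp [smul_eq_mul]
    have hterm : ∀ i j, ((star (q j) ⬝ᵥ v i) * ((σ j : ℂ) * (star (u i) ⬝ᵥ p j))).re
        = σ j * ((star (u i) ⬝ᵥ p j) * (star (q j) ⬝ᵥ v i)).re := by
      intro i j
      rw [show (star (q j) ⬝ᵥ v i) * ((σ j : ℂ) * (star (u i) ⬝ᵥ p j))
        = (σ j : ℂ) * ((star (u i) ⬝ᵥ p j) * (star (q j) ⬝ᵥ v i)) by ring]
      exact Complex.re_ofReal_mul _ _
    calc ∑ i, (star (u i) ⬝ᵥ (B *ᵥ v i)).re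
        = ∑ i, ∑ j, σ j * ((star (u i) ⬝ᵥ p j) * (star (q j) ⬝ᵥ v i)).re := by
          refine Finset.sum_congr rfl fun i _ => ?_
          rw [expand i, Complex.re_sum]
          exact Finset.sum_congr rfl fun j _ => hterm i j
      _ = ∑ j, σ j * c j := by
          rw [Finset.sum_comm]
          refine Finset.sum_congr rfl fun j _ => ?_
          rw [hcdef, Finset.mul_sum]
  -- entry bound
  have hc1 : ∀ j, c j ≤ 1 := by
    intro j
    have hb1 : ∑ i, ‖star (u i) ⬝ᵥ p j‖ ^ 2 ≤ 1 := by
      have := bessel hu (p j)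
      rwa [onsys_norm_one hp j, one_pow] at this
    have hb2 : ∑ i, ‖star (q j) ⬝ᵥ v i‖ ^ 2 ≤ 1 := by
      have := bessel hv (q j)
      rw [onsys_norm_one hq j, one_pow] at this
      calc ∑ i, ‖star (q j) ⬝ᵥ v i‖ ^ 2 = ∑ i, ‖star (v i) ⬝ᵥ q j‖ ^ 2 := by
            exact Finset.sum_congr rfl fun i _ => by rw [norm_symm]
        _ ≤ 1 := this
    have step : ∀ i, ((star (u i) ⬝ᵥ p j) * (star (q j) ⬝ᵥ v i)).re
        ≤ (‖star (u i) ⬝ᵥ p j‖ ^ 2 + ‖star (q j) ⬝ᵥ v i‖ ^ 2) / 2 := by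
      intro i
      have h1 := Complex.re_le_norm ((star (u i) ⬝ᵥ p j) * (star (q j) ⬝ᵥ v i))
      rw [norm_mul] at h1
      have h2 : ‖star (u i) ⬝ᵥ p j‖ * ‖star (q j) ⬝ᵥ v i‖
          ≤ (‖star (u i) ⬝ᵥ p j‖ ^ 2 + ‖star (q j) ⬝ᵥ v i‖ ^ 2) / 2 := by
        nlinarith [sq_nonneg (‖star (u i) ⬝ᵥ p j‖ - ‖star (q j) ⬝ᵥ v i‖)]
      exact h1.trans h2
    calc c j ≤ ∑ i, (‖star (u i) ⬝ᵥ p j‖ ^ 2 + ‖star (q j) ⬝ᵥ v i‖ ^ 2) / 2 :=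
          Finset.sum_le_sum fun i _ => step i
      _ = ((∑ i, ‖star (u i) ⬝ᵥ p j‖ ^ 2) + ∑ i, ‖star (q j) ⬝ᵥ v i‖ ^ 2) / 2 := by
          rw [← Finset.sum_add_distrib, Finset.sum_div]
      _ ≤ (1 + 1) / 2 := by linarith
      _ = 1 := by norm_num
  have hck : ∀ m : ℕ, ∑ j ∈ Finset.univ.filter (fun j : Fin n => (j : ℕ) < m), c j ≤ k := by
    intro m
    set S := Finset.univ.filter (fun j : Fin n => (j : ℕ) < m) with hSdef
    have swap : ∑ j ∈ S, c j = ∑ i, ∑ j ∈ S, ((star (u i) ⬝ᵥ p j) * (star (q j) ⬝ᵥ v i)).re := by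
      rw [hcdef, Finset.sum_comm]
    rw [swap]
    have per_i : ∀ i : Fin k, ∑ j ∈ S, ((star (u i) ⬝ᵥ p j) * (star (q j) ⬝ᵥ v i)).re ≤ 1 := by
      intro i
      have hA : ∑ j ∈ S, ‖star (u i) ⬝ᵥ p j‖ ^ 2 ≤ 1 := by
        have hfull : ∑ j, ‖star (p j) ⬝ᵥ u i‖ ^ 2 ≤ 1 := by
          have := bessel hp (u i)
          rwa [onsys_norm_one hu i, one_pow] at this
        calc ∑ j ∈ S, ‖star (u i) ⬝ᵥ p j‖ ^ 2
            ≤ ∑ j, ‖star (u i) ⬝ᵥ p j‖ ^ 2 :=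
              Finset.sum_le_sum_of_subset_of_nonneg (Finset.subset_univ S)
                (fun _ _ _ => by positivity)
          _ = ∑ j, ‖star (p j) ⬝ᵥ u i‖ ^ 2 :=
              Finset.sum_congr rfl fun j _ => by rw [norm_symm]
          _ ≤ 1 := hfull
      have hB : ∑ j ∈ S, ‖star (q j) ⬝ᵥ v i‖ ^ 2 ≤ 1 := by
        have hfull : ∑ j, ‖star (q j) ⬝ᵥ v i‖ ^ 2 ≤ 1 := by
          have := bessel hq (v i)
          rwa [onsys_norm_one hv i, one_pow] at this
        exact (Finset.sum_le_sum_of_subset_of_nonneg (Finset.subset_univ S)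
          (fun _ _ _ => by positivity)).trans hfull
      have habs : ∑ j ∈ S, ((star (u i) ⬝ᵥ p j) * (star (q j) ⬝ᵥ v i)).re
          ≤ ∑ j ∈ S, ‖star (u i) ⬝ᵥ p j‖ * ‖star (q j) ⬝ᵥ v i‖ := by
        refine Finset.sum_le_sum fun j _ => ?_
        have h1 := Complex.re_le_norm ((star (u i) ⬝ᵥ p j) * (star (q j) ⬝ᵥ v i))
        rwa [norm_mul] at h1
      have hcs := Finset.sum_mul_sq_le_sq_mul_sq S
        (fun j => ‖star (u i) ⬝ᵥ p j‖) (fun j => ‖star (q j) ⬝ᵥ v i‖)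
      have hsumnn : 0 ≤ ∑ j ∈ S, ‖star (u i) ⬝ᵥ p j‖ * ‖star (q j) ⬝ᵥ v i‖ :=
        Finset.sum_nonneg fun j _ => mul_nonneg (norm_nonneg _) (norm_nonneg _)
      have hA0 : (0:ℝ) ≤ ∑ j ∈ S, ‖star (u i) ⬝ᵥ p j‖ ^ 2 :=
        Finset.sum_nonneg fun j _ => by positivity
      have hB0 : (0:ℝ) ≤ ∑ j ∈ S, ‖star (q j) ⬝ᵥ v i‖ ^ 2 :=
        Finset.sum_nonneg fun j _ => by positivity
      have hprod : (∑ j ∈ S, ‖star (u i) ⬝ᵥ p j‖ ^ 2) * (∑ j ∈ S, ‖star (q j) ⬝ᵥ v i‖ ^ 2) ≤ 1 :=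
        mul_le_one₀ hA hB0 hB
      nlinarith [habs, hcs, hsumnn, hprod]
    calc ∑ i, ∑ j ∈ S, ((star (u i) ⬝ᵥ p j) * (star (q j) ⬝ᵥ v i)).re
        ≤ ∑ i : Fin k, (1 : ℝ) := Finset.sum_le_sum fun i _ => per_i i
      _ = k := by simp
  rw [main]
  exact abel_bound σ c svalues_antitone (fun j => svalues_nonneg j) hc1 hck

lemma entry_bound {u : Fin k → Fin n → ℂ} (hu : ONSys u) (i : Fin k) (b : Fin n) :
    ‖u i b‖ ≤ 1 := by
  have h := hu i i
  rw [if_pos rfl] at h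
  have hz : ∀ z : ℂ, (starRingEnd ℂ) z * z = ((‖z‖ ^ 2 : ℝ) : ℂ) := by
    intro z
    rw [mul_comm, Complex.mul_conj]
    norm_cast
    rw [← Complex.sq_norm]
  have h2 : ((∑ c, ‖u i c‖ ^ 2 : ℝ) : ℂ) = 1 := by
    rw [← h]
    simp only [dotProduct, Pi.star_apply, Complex.star_def, hz]
    push_cast
    rfl
  have h3 : ∑ c, ‖u i c‖ ^ 2 = 1 := by exact_mod_cast h2
  have h4 : ‖u i b‖ ^ 2 ≤ 1 := by
    rw [← h3]
    exact Finset.single_le_sum (f := fun c => ‖u i c‖ ^ 2) (fun c _ => by positivity)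
      (Finset.mem_univ b)
  nlinarith [norm_nonneg (u i b)]

lemma ell_abs_le {u v : Fin k → Fin n → ℂ} (X : Matrix (Fin n) (Fin n) ℂ)
    (hu : ONSys u) (hv : ONSys v) :
    |ell u v X| ≤ k * ∑ a, ∑ b, ‖X a b‖ := by
  have hterm : ∀ i, |(star (u i) ⬝ᵥ (X *ᵥ v i)).re| ≤ ∑ a, ∑ b, ‖X a b‖ := by
    intro i
    refine (Complex.abs_re_le_norm _).trans ?_
    show ‖star (u i) ⬝ᵥ (X *ᵥ v i)‖ ≤ _
    calc ‖∑ a, (star (u i)) a * (X *ᵥ v i) a‖ ≤ ∑ a, ‖(star (u i)) a * (X *ᵥ v i) a‖ :=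
          norm_sum_le _ _
      _ ≤ ∑ a, ∑ b, ‖X a b‖ := by
          refine Finset.sum_le_sum fun a _ => ?_
          rw [norm_mul, Pi.star_apply, norm_star]
          calc ‖u i a‖ * ‖(X *ᵥ v i) a‖ ≤ 1 * ‖(X *ᵥ v i) a‖ :=
                mul_le_mul_of_nonneg_right (entry_bound hu i a) (norm_nonneg _)
            _ = ‖∑ b, X a b * v i b‖ := by rw [one_mul]; rfl
            _ ≤ ∑ b, ‖X a b * v i b‖ := norm_sum_le _ _
            _ ≤ ∑ b, ‖X a b‖ := by
                refine Finset.sum_le_sum fun b _ => ?_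
                rw [norm_mul]
                calc ‖X a b‖ * ‖v i b‖ ≤ ‖X a b‖ * 1 :=
                      mul_le_mul_of_nonneg_left (entry_bound hv i b) (norm_nonneg _)
                  _ = ‖X a b‖ := mul_one _
  calc |ell u v X| ≤ ∑ i, |(star (u i) ⬝ᵥ (X *ᵥ v i)).re| := Finset.abs_sum_le_sum_abs _ _
    _ ≤ ∑ _i : Fin k, ∑ a, ∑ b, ‖X a b‖ := Finset.sum_le_sum fun i _ => hterm i
    _ = k * ∑ a, ∑ b, ‖X a b‖ := by simp [mul_comm]

lemma kyFan_line_le (hk : k ≤ n) (A X : Matrix (Fin n) (Fin n) ℂ) (s t : ℝ) :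
    kyFan k (A + (t : ℂ) • X) ≤ kyFan k (A + (s : ℂ) • X)
      + |t - s| * (k * ∑ a, ∑ b, ‖X a b‖) := by
  obtain ⟨u, v, hu, hv, hc⟩ := svd_exists_k hk (A + (t : ℂ) • X)
  have he : ell u v (A + (t:ℂ) • X) = kyFan k (A + (t:ℂ) • X) := ell_eval hk hu hc
  have hsplit : A + (t:ℂ) • X = (A + (s:ℂ) • X) + ((t - s : ℝ) : ℂ) • X := by
    push_cast
    module
  rw [← he, hsplit, ell_affine]
  have h1 : ell u v (A + (s:ℂ) • X) ≤ kyFan k (A + (s:ℂ) • X) := ell_bound hk _ hu hv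
  have h2 : (t - s) * ell u v X ≤ |t - s| * (k * ∑ a, ∑ b, ‖X a b‖) := by
    calc (t - s) * ell u v X ≤ |(t - s) * ell u v X| := le_abs_self _
      _ = |t - s| * |ell u v X| := abs_mul _ _
      _ ≤ |t - s| * (k * ∑ a, ∑ b, ‖X a b‖) :=
          mul_le_mul_of_nonneg_left (ell_abs_le X hu hv) (abs_nonneg _)
  linarith

lemma svalues_eq_kyFan_diff (B : Matrix (Fin n) (Fin n) ℂ) (i : Fin n) :
    svalues B i = kyFan ((i:ℕ)+1) B - kyFan (i:ℕ) B := by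
  unfold kyFan
  have hins : Finset.univ.filter (fun j : Fin n => (j:ℕ) < (i:ℕ)+1)
      = insert i (Finset.univ.filter (fun j : Fin n => (j:ℕ) < (i:ℕ))) := by
    ext j
    simp [Nat.lt_succ_iff_lt_or_eq, Fin.ext_iff, or_comm]
    rw [le_iff_eq_or_lt, Fin.ext_iff]
  rw [hins, Finset.sum_insert (by simp)]
  ring

lemma kyFan_line_cont (hk : k ≤ n) (A X : Matrix (Fin n) (Fin n) ℂ) {t : ℕ → ℝ}
    (ht : Filter.Tendsto t Filter.atTop (nhds 0)) :
    Filter.Tendsto (fun m => kyFan k (A + (t m : ℂ) • X)) Filter.atTop (nhds (kyFan k A)) := by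
  rw [← tendsto_sub_nhds_zero_iff]
  have htend : Filter.Tendsto (fun m => (k * ∑ a, ∑ b, ‖X a b‖) * |t m|)
      Filter.atTop (nhds 0) := by
    have := (ht.abs).const_mul (k * ∑ a, ∑ b, ‖X a b‖)
    simpa using this
  refine squeeze_zero_norm (fun m => ?_) htend
  have h0 : A + ((0:ℝ):ℂ) • X = A := by push_cast; module
  have h1 := kyFan_line_le hk A X 0 (t m)
  have h2 := kyFan_line_le hk A X (t m) 0
  rw [h0] at h1 h2
  rw [Real.norm_eq_abs, abs_le]
  rw [show |0 - t m| = |t m| by rw [zero_sub, abs_neg]] at h2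
  rw [sub_zero] at h1
  constructor <;> nlinarith [abs_nonneg (t m)]

lemma slope_mono (hk : k ≤ n) (A X : Matrix (Fin n) (Fin n) ℂ) :
    MonotoneOn (fun t : ℝ => (kyFan k (A + (t:ℂ) • X) - kyFan k A) / t) (Set.Ioi 0) := by
  rintro s (hs : 0 < s) t (ht : 0 < t) hst
  obtain ⟨u, v, hu, hv, hc⟩ := svd_exists_k hk (A + (s : ℂ) • X)
  have he : ell u v (A + (s:ℂ) • X) = kyFan k (A + (s:ℂ) • X) := ell_eval hk hu hc
  have hA0 : ell u v A ≤ kyFan k A := ell_bound hk A hu hv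
  have hAt : ell u v A + t * ell u v X ≤ kyFan k (A + (t:ℂ) • X) := by
    rw [← ell_affine]
    exact ell_bound hk _ hu hv
  have hgs : kyFan k (A + (s:ℂ) • X) = ell u v A + s * ell u v X :=
    he.symm.trans (ell_affine u v A X s)
  dsimp only
  rw [hgs]
  set e := ell u v X with hedef
  set c := kyFan k A - ell u v A with hcdef
  have hc0 : 0 ≤ c := sub_nonneg.mpr hA0
  have step1 : (ell u v A + s * e - kyFan k A)/s = e - c/s := by
    field_simp
    ring
  have step2 : (ell u v A + t * e - kyFan k A)/t = e - c/t := by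
    field_simp
    ring
  rw [step1]
  have hmid : e - c/s ≤ e - c/t := by
    have : c/t ≤ c/s := div_le_div_of_nonneg_left hc0 hs hst
    linarith
  refine hmid.trans ?_
  rw [← step2]
  gcongr

end KF

open Filter in
theorem stmt6 {n k : ℕ} (hk : k ≤ n) (A X : Matrix (Fin n) (Fin n) ℂ) :
    ∃ d : ℝ,
      IsGreatest {x : ℝ | ∃ u v : Fin k → Fin n → ℂ, ONSys u ∧ ONSys v ∧
          (∀ i : Fin k, A *ᵥ v i = (svalues A (Fin.castLE hk i) : ℂ) • u i) ∧
          x = ∑ i, (star (u i) ⬝ᵥ (X *ᵥ v i)).re} d ∧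
      Filter.Tendsto (fun t : ℝ => (kyFan k (A + (t : ℂ) • X) - kyFan k A) / t)
        (nhdsWithin 0 (Set.Ioi 0)) (nhds d) := by
  classical
  set slope : ℝ → ℝ := fun t => (kyFan k (A + (t:ℂ) • X) - kyFan k A) / t with hslopedef
  set S : Set ℝ := {x : ℝ | ∃ u v : Fin k → Fin n → ℂ, ONSys u ∧ ONSys v ∧
      (∀ i : Fin k, A *ᵥ v i = (svalues A (Fin.castLE hk i) : ℂ) • u i) ∧
      x = ∑ i, (star (u i) ⬝ᵥ (X *ᵥ v i)).re} with hSdef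
  have hub : ∀ x ∈ S, ∀ t : ℝ, 0 < t → x ≤ slope t := by
    rintro x ⟨u, v, hu, hv, hcond, hx⟩ t ht
    have heA : KF.ell u v A = kyFan k A := KF.ell_eval hk hu hcond
    have hineq : KF.ell u v (A + (t:ℂ) • X) ≤ kyFan k (A + (t:ℂ) • X) :=
      KF.ell_bound hk _ hu hv
    rw [KF.ell_affine, heA] at hineq
    have hx' : x = KF.ell u v X := hx
    rw [hslopedef]
    dsimp only
    rw [le_div_iff₀ ht]
    nlinarith [hineq]
  obtain ⟨u0, v0, hu0, hv0, hc0⟩ := KF.svd_exists_k hk A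
  have hx0S : KF.ell u0 v0 X ∈ S := ⟨u0, v0, hu0, hv0, hc0, rfl⟩
  have himne : (slope '' Set.Ioi 0).Nonempty := ⟨slope 1, ⟨1, by norm_num, rfl⟩⟩
  have hbdd : BddBelow (slope '' Set.Ioi 0) := ⟨KF.ell u0 v0 X, by
    rintro y ⟨t, ht, rfl⟩
    exact hub _ hx0S t ht⟩
  set d := sInf (slope '' Set.Ioi 0) with hddef
  have hlim : Filter.Tendsto slope (nhdsWithin 0 (Set.Ioi 0)) (nhds d) :=
    (KF.slope_mono hk A X).tendsto_nhdsGT hbdd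
  have hubd : ∀ x ∈ S, x ≤ d := fun x hx =>
    le_csInf himne (by rintro y ⟨t, ht, rfl⟩; exact hub x hx t ht)
  -- the maximizing sequence
  set t : ℕ → ℝ := fun m => 1 / (m + 1) with htdef
  have htpos : ∀ m, 0 < t m := fun m => by positivity
  have ht0 : Filter.Tendsto t Filter.atTop (nhds 0) := tendsto_one_div_add_atTop_nhds_zero_nat
  choose u v hu hv hcond using fun m => KF.svd_exists_k hk (A + (t m : ℂ) • X)
  set E := ((Fin k → Fin n → ℂ) × (Fin k → Fin n → ℂ))
  set seq : ℕ → E := fun m => (u m, v m) with hseqdef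
  have hseqmem : ∀ m, seq m ∈ Metric.closedBall (0 : E) 1 := by
    intro m
    rw [Metric.mem_closedBall, dist_zero_right, Prod.norm_def]
    apply max_le
    · rw [pi_norm_le_iff_of_nonneg zero_le_one]
      intro i
      rw [pi_norm_le_iff_of_nonneg zero_le_one]
      intro b
      exact KF.entry_bound (hu m) i b
    · rw [pi_norm_le_iff_of_nonneg zero_le_one]
      intro i
      rw [pi_norm_le_iff_of_nonneg zero_le_one]
      intro b
      exact KF.entry_bound (hv m) i b
  obtain ⟨a, -, φ, hφ, hconv⟩ :=
    tendsto_subseq_of_bounded Metric.isBounded_closedBall hseqmem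
  have htphi : Filter.Tendsto (fun m => t (φ m)) Filter.atTop (nhds 0) :=
    ht0.comp hφ.tendsto_atTop
  have hUc : ∀ i b, Filter.Tendsto (fun m => u (φ m) i b) Filter.atTop (nhds (a.1 i b)) := by
    intro i b
    exact ((((continuous_apply b).comp ((continuous_apply i).comp continuous_fst)).tendsto
      a).comp hconv : _)
  have hVc : ∀ i b, Filter.Tendsto (fun m => v (φ m) i b) Filter.atTop (nhds (a.2 i b)) := by
    intro i b
    exact ((((continuous_apply b).comp ((continuous_apply i).comp continuous_snd)).tendsto
      a).comp hconv : _)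
  have hdot : ∀ (x y : ℕ → Fin n → ℂ) (x0 y0 : Fin n → ℂ),
      (∀ b, Filter.Tendsto (fun m => x m b) Filter.atTop (nhds (x0 b))) →
      (∀ b, Filter.Tendsto (fun m => y m b) Filter.atTop (nhds (y0 b))) →
      Filter.Tendsto (fun m => star (x m) ⬝ᵥ y m) Filter.atTop (nhds (star x0 ⬝ᵥ y0)) := by
    intro x y x0 y0 hx hy
    simp only [dotProduct, Pi.star_apply]
    exact tendsto_finset_sum _ fun b _ => ((hx b).star.mul (hy b))
  have hUON : ONSys a.1 := by
    intro i j
    exact tendsto_nhds_unique (hdot _ _ _ _ (hUc i) (hUc j))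
      (tendsto_const_nhds.congr fun m => (hu (φ m) i j).symm)
  have hVON : ONSys a.2 := by
    intro i j
    exact tendsto_nhds_unique (hdot _ _ _ _ (hVc i) (hVc j))
      (tendsto_const_nhds.congr fun m => (hv (φ m) i j).symm)
  have hXvc : ∀ i b, Filter.Tendsto (fun m => (X *ᵥ v (φ m) i) b) Filter.atTop
      (nhds ((X *ᵥ a.2 i) b)) := by
    intro i b
    simp only [Matrix.mulVec, dotProduct]
    exact tendsto_finset_sum _ fun c _ => (tendsto_const_nhds.mul (hVc i c))
  have hsv : ∀ i : Fin k, Filter.Tendsto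
      (fun m => svalues (A + (t (φ m) : ℂ) • X) (Fin.castLE hk i)) Filter.atTop
      (nhds (svalues A (Fin.castLE hk i))) := by
    intro i
    have h1 := KF.kyFan_line_cont (k := ((Fin.castLE hk i : Fin n) : ℕ) + 1)
      (Nat.succ_le_of_lt (Fin.castLE hk i).isLt) A X htphi
    have h2 := KF.kyFan_line_cont (k := ((Fin.castLE hk i : Fin n) : ℕ))
      (le_of_lt (Fin.castLE hk i).isLt) A X htphi
    have h3 := h1.sub h2
    simp only [← KF.svalues_eq_kyFan_diff] at h3
    exact h3
  have hcondU : ∀ i : Fin k, A *ᵥ a.2 i = ((svalues A (Fin.castLE hk i) : ℝ) : ℂ) • a.1 i := by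
    intro i
    funext b
    have hAv : Filter.Tendsto (fun m => (A *ᵥ v (φ m) i) b) Filter.atTop
        (nhds ((A *ᵥ a.2 i) b)) := by
      simp only [Matrix.mulVec, dotProduct]
      exact tendsto_finset_sum _ fun c _ => (tendsto_const_nhds.mul (hVc i c))
    have heq : ∀ m, (A *ᵥ v (φ m) i) b
        = ((svalues (A + (t (φ m) : ℂ) • X) (Fin.castLE hk i) : ℝ) : ℂ) * u (φ m) i b
          - (t (φ m) : ℂ) * (X *ᵥ v (φ m) i) b := by
      intro m
      have h := congrFun (hcond (φ m) i) b
      rw [Matrix.add_mulVec, Matrix.smul_mulVec] at h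
      simp only [Pi.add_apply, Pi.smul_apply, smul_eq_mul] at h
      linear_combination h
    have htC : Filter.Tendsto (fun m => ((t (φ m) : ℝ) : ℂ)) Filter.atTop (nhds (0 : ℂ)) := by
      have := (Complex.continuous_ofReal.tendsto 0).comp htphi
      simpa [Function.comp_def] using this
    have hsC : Filter.Tendsto
        (fun m => ((svalues (A + (t (φ m) : ℂ) • X) (Fin.castLE hk i) : ℝ) : ℂ))
        Filter.atTop (nhds ((svalues A (Fin.castLE hk i) : ℝ) : ℂ)) :=
      (Complex.continuous_ofReal.tendsto _).comp (hsv i)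
    have hrhs : Filter.Tendsto (fun m =>
        ((svalues (A + (t (φ m) : ℂ) • X) (Fin.castLE hk i) : ℝ) : ℂ) * u (φ m) i b
          - (t (φ m) : ℂ) * (X *ᵥ v (φ m) i) b) Filter.atTop
        (nhds (((svalues A (Fin.castLE hk i) : ℝ) : ℂ) * a.1 i b - 0 * (X *ᵥ a.2 i) b)) :=
      (hsC.mul (hUc i b)).sub (htC.mul (hXvc i b))
    have hfinal := tendsto_nhds_unique hAv (hrhs.congr fun m => (heq m).symm)
    rw [hfinal]
    simp
  have hellconv : Filter.Tendsto (fun m => KF.ell (u (φ m)) (v (φ m)) X) Filter.atTop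
      (nhds (KF.ell a.1 a.2 X)) := by
    unfold KF.ell
    apply tendsto_finset_sum
    intro i _
    exact (Complex.continuous_re.tendsto _).comp
      (hdot (fun m => u (φ m) i) (fun m => X *ᵥ v (φ m) i) (a.1 i) (X *ᵥ a.2 i)
        (hUc i) (hXvc i))
  have hslopele : ∀ m, slope (t (φ m)) ≤ KF.ell (u (φ m)) (v (φ m)) X := by
    intro m
    have hgt : kyFan k (A + (t (φ m):ℂ) • X)
        = KF.ell (u (φ m)) (v (φ m)) A + t (φ m) * KF.ell (u (φ m)) (v (φ m)) X :=
      (KF.ell_eval hk (hu _) (hcond _)).symm.trans (KF.ell_affine _ _ _ _ _)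
    have hA0 : KF.ell (u (φ m)) (v (φ m)) A ≤ kyFan k A := KF.ell_bound hk A (hu _) (hv _)
    rw [hslopedef]
    dsimp only
    rw [div_le_iff₀ (htpos _)]
    nlinarith [htpos (φ m)]
  have hts : Filter.Tendsto (fun m => t (φ m)) Filter.atTop (nhdsWithin 0 (Set.Ioi 0)) :=
    tendsto_nhdsWithin_iff.mpr ⟨htphi, Filter.Eventually.of_forall fun m => htpos (φ m)⟩
  have hslopetend : Filter.Tendsto (fun m => slope (t (φ m))) Filter.atTop (nhds d) :=
    hlim.comp hts
  have hdle : d ≤ KF.ell a.1 a.2 X :=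
    le_of_tendsto_of_tendsto' hslopetend hellconv hslopele
  have hmem : KF.ell a.1 a.2 X ∈ S := ⟨a.1, a.2, hUON, hVON, hcondU, rfl⟩
  have hled : KF.ell a.1 a.2 X ≤ d := hubd _ hmem
  have hdS : d ∈ S := by
    rw [show d = KF.ell a.1 a.2 X from le_antisymm hdle hled]
    exact hmem
  exact ⟨d, ⟨hdS, hubd⟩, hlim⟩
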